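/- arXiv:1308.2538 — 2 statements merged into one kernel-verified Lean document; each statement's English description precedes it below -/
import Mathlib

section
/- The generalized Laguerre polynomial L_n^{(ν)} is a polynomial solution of the differential equation x·y'' + (ν+1-x)·y' + n·y = 0; that is, for all real x, x·(L_n^{(ν)})''(x) + (ν+1-x)·(L_n^{(ν)})'(x) + n·L_n^{(ν)}(x) = 0. -/
open Finset

/-- Pochhammer symbol (rising factorial) `(a)_k` over the reals. -/
noncomputable def poch (a : ℝ) (k : ℕ) : ℝ := (ascPochhammer ℝ k).eval a

/-- Generalized Laguerre polynomial
`L_n^{(ν)}(x) = ∑_{k=0}^n (-1)^k binom(n+ν, n-k) x^k / k!`,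
where `binom(n+ν, n-k) = (ν+k+1)_{n-k}/(n-k)!`. -/
noncomputable def laguerre (ν : ℝ) (n : ℕ) (x : ℝ) : ℝ :=
  ∑ k ∈ Finset.range (n + 1),
    (-1 : ℝ) ^ k * (poch (ν + k + 1) (n - k) / (n - k).factorial) * x ^ k / k.factorial

open Polynomial

noncomputable def lagC (ν : ℝ) (n k : ℕ) : ℝ :=
  (-1 : ℝ) ^ k * (poch (ν + k + 1) (n - k) / (n - k).factorial) / k.factorial

noncomputable def lagP (ν : ℝ) (n : ℕ) : ℝ[X] :=
  ∑ k ∈ Finset.range (n + 1), C (lagC ν n k) * X ^ k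

lemma laguerre_eq_eval (ν : ℝ) (n : ℕ) :
    laguerre ν n = fun x => (lagP ν n).eval x := by
  funext x
  simp only [laguerre, lagP, lagC, eval_finset_sum, eval_mul, eval_pow, eval_C, eval_X]
  exact Finset.sum_congr rfl fun k _ => by ring

lemma lagP_coeff (ν : ℝ) (n m : ℕ) :
    (lagP ν n).coeff m = if m ≤ n then lagC ν n m else 0 := by
  simp only [lagP, finset_sum_coeff, coeff_C_mul, coeff_X_pow]
  rw [Finset.sum_congr rfl (fun k _ => by rw [mul_ite, mul_one, mul_zero]),
    Finset.sum_ite_eq (Finset.range (n+1)) m (lagC ν n)]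
  simp [Nat.lt_succ_iff]

lemma poch_succ (a : ℝ) (m : ℕ) : poch a (m + 1) = a * poch (a + 1) m := by
  simp [poch, ascPochhammer_succ_left, eval_comp]

lemma lagC_rec (ν : ℝ) (n k : ℕ) (h : k < n) :
    ((k : ℝ) + 1) * (ν + k + 1) * lagC ν n (k + 1) = ((k : ℝ) - n) * lagC ν n k := by
  obtain ⟨m, rfl⟩ : ∃ m, n = k + m + 1 := ⟨n - k - 1, by omega⟩
  have h1 : k + m + 1 - (k + 1) = m := by omega
  have h2 : k + m + 1 - k = m + 1 := by omega
  simp only [lagC, h1, h2, poch_succ, Nat.factorial_succ, pow_succ]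
  push_cast
  rw [show ν + ((k : ℝ) + 1) + 1 = ν + (k : ℝ) + 1 + 1 from by ring]
  have hk : (k.factorial : ℝ) ≠ 0 := Nat.cast_ne_zero.mpr k.factorial_ne_zero
  have hm : (m.factorial : ℝ) ≠ 0 := Nat.cast_ne_zero.mpr m.factorial_ne_zero
  have hk1 : ((k : ℝ) + 1) ≠ 0 := by positivity
  have hm1 : ((m : ℝ) + 1) ≠ 0 := by positivity
  field_simp
  ring

lemma lagP_coeff_rec (ν : ℝ) (n m : ℕ) :
    ((m : ℝ) + 1) * (ν + m + 1) * (lagP ν n).coeff (m + 1)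
      = ((m : ℝ) - n) * (lagP ν n).coeff m := by
  rcases lt_trichotomy m n with h | h | h
  · rw [lagP_coeff, lagP_coeff, if_pos (by omega), if_pos (by omega)]
    exact lagC_rec ν n m h
  · subst h
    rw [lagP_coeff, lagP_coeff, if_neg (by omega), if_pos le_rfl]
    simp
  · rw [lagP_coeff, lagP_coeff, if_neg (by omega), if_neg (by omega)]
    simp

lemma lagP_ode (ν : ℝ) (n : ℕ) :
    X * derivative (derivative (lagP ν n)) + (C (ν + 1) - X) * derivative (lagP ν n)
      + C (n : ℝ) * (lagP ν n) = 0 := by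
  set p := lagP ν n with hp
  ext m
  simp only [coeff_add, coeff_zero, sub_mul, coeff_sub, coeff_C_mul]
  cases m with
  | zero =>
    simp only [mul_coeff_zero, coeff_X_zero, zero_mul, coeff_derivative]
    have h := lagP_coeff_rec ν n 0
    push_cast at h ⊢
    linear_combination h
  | succ m =>
    rw [coeff_X_mul, coeff_X_mul]
    simp only [coeff_derivative]
    have h := lagP_coeff_rec ν n (m + 1)
    push_cast at h ⊢
    linear_combination h

/-- `L_n^{(ν)}` solves the Laguerre differential equation
`x y'' + (ν+1-x) y' + n y = 0`. -/
theorem laguerre_ode (ν : ℝ) (n : ℕ) (x : ℝ) :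
    x * deriv (deriv (laguerre ν n)) x + (ν + 1 - x) * deriv (laguerre ν n) x
      + n * laguerre ν n x = 0 := by
  rw [laguerre_eq_eval]
  have h1 : deriv (fun x => (lagP ν n).eval x)
      = fun x => (derivative (lagP ν n)).eval x := funext fun y => Polynomial.deriv _
  rw [h1]
  have h2 : deriv (fun x => (derivative (lagP ν n)).eval x)
      = fun x => (derivative (derivative (lagP ν n))).eval x :=
    funext fun y => Polynomial.deriv _
  rw [h2]
  have := congrArg (fun q => Polynomial.eval x q) (lagP_ode ν n)
  simpa [mul_comm] using this
end

section
/- (Series rearrangement identity, specialized) For real ν > -1, real x, and real c > 0 with c not a nonpositive integer, e^{-x} ∑_{n=0}^{∞} (x^n / (c)_n) L_n^{(ν)}(x) = ∑_{n=0}^{∞} ((-x)^n / n!) ∑_{k=0}^{n} ((-n)_k (-n-ν)_k (-1)^k) / ((c)_k k!). -/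
open Finset

lemma poch_zero (a : ℝ) : poch a 0 = 1 := by simp [poch]

lemma poch_succ_right (a : ℝ) (n : ℕ) : poch a (n + 1) = poch a n * (a + n) := by
  simp [poch, ascPochhammer_succ_right]

lemma poch_succ_left (a : ℝ) (n : ℕ) : poch a (n + 1) = a * poch (a + 1) n := by
  simp [poch, ascPochhammer_succ_left, Polynomial.eval_comp]

lemma poch_pos {a : ℝ} (ha : 0 < a) (n : ℕ) : 0 < poch a n := ascPochhammer_pos n a ha

lemma descFactorial_succ_cast (m k : ℕ) :
    ((m + 1).descFactorial k : ℝ) = (m.descFactorial k : ℝ) + k * m.descFactorial (k - 1) := by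
  cases k with
  | zero => simp
  | succ k =>
    rcases le_or_gt k m with h | h
    · rw [Nat.succ_descFactorial_succ, Nat.descFactorial_succ]
      push_cast [h]
      ring
    · rw [Nat.succ_descFactorial_succ, Nat.descFactorial_succ,
        Nat.descFactorial_eq_zero_iff_lt.2 h]
      have : m - k = 0 := Nat.sub_eq_zero_of_le h.le
      simp [this]
      right; exact h

lemma poch_step (b : ℝ) (j : ℕ) :
    poch (b + 1) (j + 1) = poch b (j + 1) + (j + 1) * poch (b + 1) j := by
  rw [poch_succ_right, poch_succ_left]
  ring

lemma poch_key : ∀ (m n : ℕ) (a : ℝ),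
    ∑ k ∈ range (n + 1),
        (n.choose k : ℝ) * (m.descFactorial k : ℝ) * poch (a + k) (n - k)
      = poch (a + m) n := by
  intro m
  induction m with
  | zero =>
    intro n a
    rw [Finset.sum_eq_single 0]
    · simp
    · intro k _ hk
      cases k with
      | zero => exact absurd rfl hk
      | succ k => simp
    · simp
  | succ m ih =>
    intro n a
    cases n with
    | zero => simp [poch_zero]
    | succ j =>
      have split : ∀ k ∈ range (j + 1 + 1),
          ((j+1).choose k : ℝ) * ((m + 1).descFactorial k : ℝ) * poch (a + k) (j + 1 - k)
          = ((j+1).choose k : ℝ) * (m.descFactorial k : ℝ) * poch (a + k) (j + 1 - k)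
            + ((j+1).choose k : ℝ) * k * (m.descFactorial (k - 1) : ℝ) * poch (a + k) (j + 1 - k) := by
        intro k _
        rw [descFactorial_succ_cast]
        ring
      rw [Finset.sum_congr rfl split, Finset.sum_add_distrib, ih (j+1) a]
      have second : ∑ k ∈ range (j + 1 + 1),
          ((j+1).choose k : ℝ) * k * (m.descFactorial (k - 1) : ℝ) * poch (a + k) (j + 1 - k)
          = (j + 1) * poch (a + 1 + m) j := by
        rw [Finset.sum_range_succ']
        simp only [Nat.cast_zero, mul_zero, zero_mul, add_zero]
        rw [← ih j (a + 1), Finset.mul_sum]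
        apply Finset.sum_congr rfl
        intro i hi
        have hc : ((j+1).choose (i+1) : ℝ) * (i+1) = (j+1) * (j.choose i : ℝ) := by
          exact_mod_cast congrArg (Nat.cast (R := ℝ)) (Nat.add_one_mul_choose_eq j i).symm
        have h1 : a + ↑(i + 1) = a + 1 + i := by push_cast; ring
        have h2 : j + 1 - (i + 1) = j - i := by omega
        rw [h1, h2]
        push_cast
        linear_combination (↑(m.descFactorial i) * poch (a + 1 + (i:ℝ)) (j - i)) * hc
      rw [second]
      have e1 : a + 1 + (m:ℝ) = a + ↑m + 1 := by ring
      have e2 : a + ((m:ℝ) + 1) = a + ↑m + 1 := by ring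
      have := poch_step (a + m) j
      push_cast at this ⊢
      rw [e1, e2]
      linarith [this]

lemma poch_neg (y : ℝ) : ∀ n : ℕ, poch (-y) n = (-1) ^ n * poch (y - n + 1) n := by
  intro n
  induction n with
  | zero => simp [poch_zero]
  | succ n ih =>
    rw [poch_succ_right, ih]
    have h1 : y - ↑(n + 1) + 1 = y - n := by push_cast; ring
    rw [h1, poch_succ_left]
    have h2 : y - ↑n + 1 = y - n + 1 := by norm_num
    ring_nf

lemma poch_neg_nat (N n : ℕ) :
    poch (-(N : ℝ)) n = (-1) ^ n * (N.descFactorial n : ℝ) := by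
  induction n with
  | zero => simp [poch_zero]
  | succ n ih =>
    rw [poch_succ_right, ih, Nat.descFactorial_succ]
    rcases le_or_gt n N with h | h
    · push_cast [h]
      ring
    · rw [Nat.descFactorial_eq_zero_iff_lt.2 h]
      have : N - n = 0 := by omega
      simp [this]

lemma per_n (ν c x : ℝ) (hc : 0 < c) (n m : ℕ) :
    ∑ k ∈ range (n + 1), (if n + k ≤ n + m then
        (-x) ^ (n + m - n - k) / (n + m - n - k).factorial *
          (x ^ n / poch c n *
            ((-1 : ℝ) ^ k * (poch (ν + k + 1) (n - k) / (n - k).factorial) * x ^ k / k.factorial))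
      else 0)
      = (-x) ^ (n + m) / (n + m).factorial *
        (poch (-((n + m : ℕ) : ℝ)) n * poch (-((n + m : ℕ) : ℝ) - ν) n * (-1 : ℝ) ^ n /
          (poch c n * n.factorial)) := by
  have hpc : poch c n ≠ 0 := (poch_pos hc n).ne'
  have hfm : (m.factorial : ℝ) ≠ 0 := by exact_mod_cast m.factorial_ne_zero
  have hfn : (n.factorial : ℝ) ≠ 0 := by exact_mod_cast n.factorial_ne_zero
  have hfact : ((n + m).factorial : ℝ) = m.factorial * ((n + m).descFactorial n : ℝ) := by
    rw [← Nat.factorial_mul_descFactorial (Nat.le_add_right n m)]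
    push_cast [Nat.add_sub_cancel_left]
    ring
  have hRHS : (-x) ^ (n + m) / (n + m).factorial *
        (poch (-((n + m : ℕ) : ℝ)) n * poch (-((n + m : ℕ) : ℝ) - ν) n * (-1 : ℝ) ^ n /
          (poch c n * n.factorial))
      = ∑ k ∈ range (n + 1),
          (-1 : ℝ) ^ m * x ^ (n + m) * (n.choose k) * (m.descFactorial k) *
            poch (ν + 1 + k) (n - k) / (poch c n * m.factorial * n.factorial) := by
    rw [poch_neg_nat (n + m) n,
      show (-((n + m : ℕ) : ℝ) - ν) = -(((n + m : ℕ) : ℝ) + ν) by ring,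
      poch_neg (((n + m : ℕ) : ℝ) + ν) n,
      show ((n + m : ℕ) : ℝ) + ν - ↑n + 1 = ν + 1 + (m : ℝ) by push_cast; ring,
      ← poch_key m n (ν + 1)]
    have hshape : ∀ S : ℝ,
        (-x) ^ (n + m) / (n + m).factorial *
          ((-1 : ℝ) ^ n * ((n + m).descFactorial n : ℝ) * ((-1 : ℝ) ^ n * S) * (-1 : ℝ) ^ n /
            (poch c n * n.factorial))
        = ((-x) ^ (n + m) * (-1 : ℝ) ^ n * ((n + m).descFactorial n : ℝ) /
            (((n + m).factorial : ℝ) * poch c n * n.factorial)) * S := by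
      intro S
      have h2 : (-1 : ℝ) ^ n * (-1 : ℝ) ^ n = 1 := by rw [← mul_pow]; norm_num
      linear_combination ((-x) ^ (n + m) / ((n + m).factorial : ℝ) *
        (((n + m).descFactorial n : ℝ) * S / (poch c n * n.factorial)) * (-1 : ℝ) ^ n) * h2
    rw [hshape, Finset.mul_sum]
    refine Finset.sum_congr rfl fun k hk => ?_
    have hsq : (-1 : ℝ) ^ n * (-1 : ℝ) ^ n = 1 := by rw [← mul_pow]; norm_num
    have hdd : (((n + m).descFactorial n : ℕ) : ℝ) ≠ 0 := by
      have := Nat.descFactorial_eq_zero_iff_lt (n := n + m) (k := n)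
      have h0 : (n + m).descFactorial n ≠ 0 := by omega
      exact_mod_cast h0
    rw [neg_pow x (n + m), pow_add ((-1:ℝ)) n m, hfact]
    field_simp
    ring_nf
    have h12 : (-1 : ℝ) ^ (n * 2) = 1 := by rw [mul_comm, pow_mul]; norm_num
    rw [h12, mul_one]
  rw [hRHS]
  refine Finset.sum_congr rfl fun k hk => ?_
  have hkn : k ≤ n := by simpa using Nat.lt_succ_iff.mp (Finset.mem_range.mp hk)
  by_cases hkm : k ≤ m
  · rw [if_pos (by omega)]
    have hred : n + m - n - k = m - k := by omega
    rw [hred]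
    have hfk : (k.factorial : ℝ) ≠ 0 := by exact_mod_cast k.factorial_ne_zero
    have hfnk : ((n - k).factorial : ℝ) ≠ 0 := by exact_mod_cast (n - k).factorial_ne_zero
    have hfmk : ((m - k).factorial : ℝ) ≠ 0 := by exact_mod_cast (m - k).factorial_ne_zero
    have hmfac : (m.factorial : ℝ) = (m - k).factorial * (m.descFactorial k : ℝ) := by
      rw [← Nat.factorial_mul_descFactorial hkm]; push_cast; ring
    have hnfac : (n.factorial : ℝ) = (n.choose k) * k.factorial * (n - k).factorial := by
      exact_mod_cast congrArg (Nat.cast (R := ℝ)) (Nat.choose_mul_factorial_mul_factorial hkn).symm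
    have hx : x ^ (n + m) = x ^ (m - k) * x ^ n * x ^ k := by
      rw [← pow_add, ← pow_add]; congr 1; omega
    have hs : (-1 : ℝ) ^ m = (-1 : ℝ) ^ (m - k) * (-1 : ℝ) ^ k := by
      rw [← pow_add]; congr 1; omega
    have harg : ν + 1 + (k : ℝ) = ν + k + 1 := by ring
    have hch : ((n.choose k : ℕ) : ℝ) ≠ 0 := by
      exact_mod_cast (Nat.choose_pos hkn).ne'
    have hdf : ((m.descFactorial k : ℕ) : ℝ) ≠ 0 := by
      have : 0 < m.descFactorial k := by
        have := Nat.descFactorial_eq_zero_iff_lt (n := m) (k := k)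
        omega
      exact_mod_cast this.ne'
    rw [hmfac, hnfac, hx, hs, harg, neg_pow x (m - k)]
    field_simp
  · rw [if_neg (by omega), Nat.descFactorial_eq_zero_iff_lt.2 (by omega)]
    simp

lemma choose_le_two_pow (n k : ℕ) : n.choose k ≤ 2 ^ n := by
  rcases le_or_gt k n with h | h
  · calc n.choose k ≤ ∑ m ∈ range (n + 1), n.choose m :=
        Finset.single_le_sum (f := fun m => n.choose m) (fun _ _ => Nat.zero_le _)
          (Finset.mem_range.mpr (by omega))
    _ = 2 ^ n := Nat.sum_range_choose n
  · simp [Nat.choose_eq_zero_of_lt h]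

lemma poch_nonneg {a : ℝ} (ha : 0 ≤ a) (n : ℕ) : 0 ≤ poch a n := by
  induction n with
  | zero => simp [poch_zero]
  | succ n ih => rw [poch_succ_right]; exact mul_nonneg ih (by positivity)

lemma poch_mono {a b : ℝ} (ha : 0 ≤ a) (hab : a ≤ b) (n : ℕ) : poch a n ≤ poch b n := by
  induction n with
  | zero => simp [poch_zero]
  | succ n ih =>
    rw [poch_succ_right, poch_succ_right]
    exact mul_le_mul ih (by linarith) (by positivity) (poch_nonneg (by linarith) n)

lemma poch_lb {c : ℝ} (hc : 0 < c) (n : ℕ) :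
    min c 1 * ((n - 1).factorial : ℝ) ≤ poch c n := by
  induction n with
  | zero => simpa [poch_zero] using min_le_right c 1
  | succ n ih =>
    rw [poch_succ_right]
    rcases Nat.eq_zero_or_pos n with rfl | hn
    · simpa [poch_zero] using min_le_left c 1
    · have hfac : ((n + 1 - 1).factorial : ℝ) = ((n - 1).factorial : ℝ) * n := by
        rw [Nat.succ_sub_one, ← Nat.mul_factorial_pred hn.ne']
        push_cast; ring
      calc min c 1 * ((n + 1 - 1).factorial : ℝ)
          = (min c 1 * ((n - 1).factorial : ℝ)) * n := by rw [hfac]; ring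
        _ ≤ poch c n * (c + n) := by
            apply mul_le_mul ih (by linarith) (by positivity)
              (le_trans (by positivity) ih)
  -- nonneg of poch c n
lemma poch_ub {ν : ℝ} (hν : -1 < ν) (k j : ℕ) :
    poch (ν + k + 1) j ≤ (2 : ℝ) ^ (Nat.ceil (ν + 1) + k + j) * j.factorial := by
  set A := Nat.ceil (ν + 1) with hA
  have h1 : poch (ν + k + 1) j ≤ poch (((A + k : ℕ) : ℝ)) j := by
    apply poch_mono (by push_cast; linarith) _ j
    have := Nat.le_ceil (ν + 1)
    push_cast
    linarith
  have h2 : poch (((A + k : ℕ) : ℝ)) j = ((A + k).ascFactorial j : ℝ) := by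
    rw [Nat.cast_ascFactorial]; rfl
  have h3 : (A + k).ascFactorial j ≤ 2 ^ (A + k + j) * j.factorial := by
    rw [Nat.ascFactorial_eq_factorial_mul_choose']
    calc j.factorial * (A + k + j - 1).choose j
        ≤ j.factorial * 2 ^ (A + k + j - 1) :=
          Nat.mul_le_mul_left _ (choose_le_two_pow _ _)
      _ ≤ 2 ^ (A + k + j) * j.factorial := by
          rw [Nat.mul_comm]
          exact Nat.mul_le_mul_right _ (Nat.pow_le_pow_right (by norm_num) (by omega))
  calc poch (ν + k + 1) j ≤ ((A + k).ascFactorial j : ℝ) := h2 ▸ h1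
    _ ≤ (2 : ℝ) ^ (A + k + j) * j.factorial := by exact_mod_cast h3

noncomputable def emF (x : ℝ) (m : ℕ) : ℝ := (-x) ^ m / m.factorial

noncomputable def g2F (ν c x : ℝ) (p : ℕ × ℕ) : ℝ :=
  if p.2 ≤ p.1 then
    x ^ p.1 / poch c p.1 *
      ((-1 : ℝ) ^ p.2 * (poch (ν + p.2 + 1) (p.1 - p.2) / (p.1 - p.2).factorial) * x ^ p.2 /
        p.2.factorial)
  else 0

lemma summable_emF_norm (x : ℝ) : Summable fun m : ℕ => ‖emF x m‖ := by
  apply Summable.congr (Real.summable_pow_div_factorial |x|)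
  intro m
  rw [emF, Real.norm_eq_abs, abs_div, abs_pow, abs_neg, abs_of_nonneg (by positivity : (0:ℝ) ≤ (m.factorial : ℝ))]

lemma summable_aux (r : ℝ) : Summable (fun n : ℕ => r ^ n / ((n - 1).factorial : ℝ)) := by
  apply (summable_nat_add_iff 1).mp
  apply Summable.congr ((Real.summable_pow_div_factorial r).mul_left r)
  intro n
  simp [pow_succ, mul_comm, mul_div_assoc, mul_left_comm]

lemma g2F_norm_bound {ν c : ℝ} (x : ℝ) (hν : -1 < ν) (hc : 0 < c) (p : ℕ × ℕ) :
    ‖g2F ν c x p‖ ≤ ((2 : ℝ) ^ Nat.ceil (ν + 1) / min c 1) *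
      ((2 * |x|) ^ p.1 / ((p.1 - 1).factorial : ℝ)) * (|x| ^ p.2 / p.2.factorial) := by
  obtain ⟨n, k⟩ := p
  have hmin : (0:ℝ) < min c 1 := lt_min hc one_pos
  by_cases hkn : k ≤ n
  · have hpc : (0:ℝ) < poch c n := poch_pos hc n
    have hP : (0:ℝ) ≤ poch (ν + k + 1) (n - k) := poch_nonneg (by push_cast; linarith) _
    have habs : ‖g2F ν c x (n, k)‖
        = |x| ^ n / poch c n *
          (poch (ν + k + 1) (n - k) / ((n - k).factorial : ℝ) * (|x| ^ k / k.factorial)) := by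
      rw [g2F]
      simp only [if_pos hkn]
      rw [Real.norm_eq_abs, abs_mul, abs_div, abs_pow, abs_of_pos hpc, abs_div, abs_mul,
        abs_mul, abs_pow, abs_pow, abs_neg, abs_one, one_pow, one_mul,
        abs_div, abs_of_nonneg hP, abs_of_nonneg (by positivity : (0:ℝ) ≤ ((n - k).factorial : ℝ)),
        abs_of_nonneg (by positivity : (0:ℝ) ≤ (k.factorial : ℝ))]
      ring
    rw [habs]
    have h1 : |x| ^ n / poch c n ≤ |x| ^ n / (min c 1 * ((n - 1).factorial : ℝ)) := by
      apply div_le_div_of_nonneg_left (by positivity) (by positivity) (poch_lb hc n)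
    have h2 : poch (ν + k + 1) (n - k) / ((n - k).factorial : ℝ)
        ≤ (2 : ℝ) ^ (Nat.ceil (ν + 1) + n) := by
      rw [div_le_iff₀ (by positivity)]
      have := poch_ub hν k (n - k)
      have he : Nat.ceil (ν + 1) + k + (n - k) = Nat.ceil (ν + 1) + n := by omega
      rwa [he] at this
    calc |x| ^ n / poch c n *
          (poch (ν + k + 1) (n - k) / ((n - k).factorial : ℝ) * (|x| ^ k / k.factorial))
        ≤ |x| ^ n / (min c 1 * ((n - 1).factorial : ℝ)) *
          ((2 : ℝ) ^ (Nat.ceil (ν + 1) + n) * (|x| ^ k / k.factorial)) := by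
          apply mul_le_mul h1 (mul_le_mul_of_nonneg_right h2 (by positivity))
            (by positivity) (by positivity)
      _ = ((2 : ℝ) ^ Nat.ceil (ν + 1) / min c 1) *
            ((2 * |x|) ^ n / ((n - 1).factorial : ℝ)) * (|x| ^ k / k.factorial) := by
          rw [mul_pow, pow_add]
          field_simp
  · rw [g2F]
    simp only [if_neg hkn, norm_zero]
    positivity

lemma summable_g2F_norm {ν c : ℝ} (x : ℝ) (hν : -1 < ν) (hc : 0 < c) :
    Summable fun p : ℕ × ℕ => ‖g2F ν c x p‖ := by
  have hmin : (0:ℝ) < min c 1 := lt_min hc one_pos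
  have hu : Summable (fun n : ℕ => (2 * |x|) ^ n / ((n - 1).factorial : ℝ)) := summable_aux _
  have hv : Summable (fun k : ℕ => |x| ^ k / (k.factorial : ℝ)) :=
    Real.summable_pow_div_factorial _
  have hprod : Summable (fun p : ℕ × ℕ =>
      ((2 * |x|) ^ p.1 / ((p.1 - 1).factorial : ℝ)) * (|x| ^ p.2 / p.2.factorial)) :=
    hu.mul_of_nonneg hv (fun n => by positivity) (fun k => by positivity)
  apply Summable.of_nonneg_of_le (fun _ => norm_nonneg _) (g2F_norm_bound x hν hc)
  simpa [mul_assoc] using hprod.mul_left ((2 : ℝ) ^ Nat.ceil (ν + 1) / min c 1)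

lemma inner_m (G : ℕ → ℝ) (N n k : ℕ) :
    ∑ m ∈ range (N + 1), (if m + n + k = N then G m else 0)
      = if n + k ≤ N then G (N - n - k) else 0 := by
  by_cases h : n + k ≤ N
  · rw [if_pos h, Finset.sum_eq_single (N - n - k)]
    · rw [if_pos (by omega)]
    · intro m _ hne; rw [if_neg (by omega)]
    · intro hnot; exact absurd (Finset.mem_range.mpr (by omega)) hnot
  · rw [if_neg h]
    apply Finset.sum_eq_zero
    intro m _
    rw [if_neg (by omega)]

/-- Series rearrangement identity (the `p = 0, q = 1, y = -1` case of (1.1)). -/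
theorem series_rearrangement (ν c x : ℝ) (hν : ν > -1) (hc : c > 0)
    (hc' : ∀ m : ℕ, c ≠ -(m : ℝ)) :
    Real.exp (-x) * ∑' n : ℕ, x ^ n / poch c n * laguerre ν n x =
      ∑' n : ℕ, (-x) ^ n / n.factorial *
        ∑ k ∈ Finset.range (n + 1),
          poch (-(n : ℝ)) k * poch (-(n : ℝ) - ν) k * (-1 : ℝ) ^ k /
            (poch c k * k.factorial) := by
  classical
  have hg2n := summable_g2F_norm x hν hc
  have hemn := summable_emF_norm x
  have hg2 : Summable (g2F ν c x) := hg2n.of_norm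
  have hF : Summable (fun z : ℕ × ℕ × ℕ => emF x z.1 * g2F ν c x z.2) :=
    summable_mul_of_summable_norm hemn hg2n
  set w : ℕ × ℕ × ℕ → ℕ := fun z => z.1 + z.2.1 + z.2.2 with hw
  have hlag : ∀ n : ℕ, x ^ n / poch c n * laguerre ν n x = ∑' k : ℕ, g2F ν c x (n, k) := by
    intro n
    rw [tsum_eq_sum (s := range (n + 1))
      (fun k hk => by rw [g2F, if_neg (by simpa using hk)])]
    rw [laguerre, Finset.mul_sum]
    refine Finset.sum_congr rfl fun k hk => ?_
    rw [g2F, if_pos (Nat.lt_succ_iff.mp (Finset.mem_range.mp hk))]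
  have hexp : Real.exp (-x) = ∑' m : ℕ, emF x m := by
    rw [Real.exp_eq_exp_ℝ, NormedSpace.exp_eq_tsum_div]
    rfl
  calc Real.exp (-x) * ∑' n : ℕ, x ^ n / poch c n * laguerre ν n x
      = (∑' m : ℕ, emF x m) * ∑' p : ℕ × ℕ, g2F ν c x p := by
        rw [hexp, tsum_congr hlag, ← Summable.tsum_prod' hg2 hg2.prod_factor]
    _ = ∑' z : ℕ × ℕ × ℕ, emF x z.1 * g2F ν c x z.2 :=
        tsum_mul_tsum_of_summable_norm hemn hg2n
    _ = ∑' N : ℕ, ∑' z : ↥(w ⁻¹' {N}), emF x (z : ℕ × ℕ × ℕ).1 * g2F ν c x (z : ℕ × ℕ × ℕ).2 :=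
        ((hF.hasSum.tsum_fiberwise w).tsum_eq).symm
    _ = ∑' N : ℕ, (-x) ^ N / N.factorial *
          ∑ k ∈ Finset.range (N + 1),
            poch (-(N : ℝ)) k * poch (-(N : ℝ) - ν) k * (-1 : ℝ) ^ k /
              (poch c k * k.factorial) := by
        refine tsum_congr fun N => ?_
        rw [tsum_subtype (w ⁻¹' {N}) (fun z => emF x z.1 * g2F ν c x z.2)]
        rw [tsum_eq_sum (s := range (N + 1) ×ˢ range (N + 1) ×ˢ range (N + 1)) ?outside]
        case outside =>
          intro z hz
          rw [Set.indicator_apply, if_neg]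
          intro hzN
          rw [Set.mem_preimage, Set.mem_singleton_iff] at hzN
          apply hz
          simp only [Finset.mem_product, Finset.mem_range, hw] at hzN ⊢
          omega
        have hind : ∀ z : ℕ × ℕ × ℕ,
            Set.indicator (w ⁻¹' {N}) (fun z => emF x z.1 * g2F ν c x z.2) z
            = if z.1 + z.2.1 + z.2.2 = N then emF x z.1 * g2F ν c x z.2 else 0 := by
          intro z
          rw [Set.indicator_apply]
          congr 1
        rw [Finset.sum_congr rfl fun z _ => hind z]
        rw [Finset.sum_product]
        simp only [Finset.sum_product]
        rw [Finset.sum_comm]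
        have hswap : ∀ n ∈ range (N + 1),
            ∑ m ∈ range (N + 1), ∑ k ∈ range (N + 1),
              (if m + n + k = N then emF x m * g2F ν c x (n, k) else 0)
            = ∑ k ∈ range (N + 1),
                (if n + k ≤ N then emF x (N - n - k) * g2F ν c x (n, k) else 0) := by
          intro n _
          rw [Finset.sum_comm]
          exact Finset.sum_congr rfl fun k _ => inner_m (fun m => emF x m * g2F ν c x (n, k)) N n k
        rw [Finset.sum_congr rfl hswap, Finset.mul_sum]
        refine Finset.sum_congr rfl fun n hn => ?_
        have hnN : n ≤ N := Nat.lt_succ_iff.mp (Finset.mem_range.mp hn)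
        rw [← Finset.sum_subset (Finset.range_subset_range.mpr (by omega) :
            range (n + 1) ⊆ range (N + 1)) ?vanish]
        case vanish =>
          intro k _ hk
          have hkn : ¬ k ≤ n := by simpa using hk
          rw [g2F, if_neg hkn, mul_zero, ite_self]
        have hNm : N = n + (N - n) := by omega
        rw [hNm]
        rw [← per_n ν c x hc n (N - n)]
        refine Finset.sum_congr rfl fun k hk => ?_
        have hkn : k ≤ n := Nat.lt_succ_iff.mp (Finset.mem_range.mp hk)
        simp only [emF, g2F, if_pos hkn]
end
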